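/- Let H₁ and H₂ be Hilbert spaces over 𝕜 (𝕜 = ℝ or ℂ) with H₁ nontrivial, and let T : H₁ → H₂ be a bounded linear operator that is not a scalar multiple of an isometry, i.e., there is no constant c ≥ 0 with ‖Tz‖ = c‖z‖ for all z ∈ H₁. If both M_T and m_T are nonempty, then m_T ⊆ (M_T)^⊥; that is, ⟨y, x⟩ = 0 for every y ∈ m_T and every x ∈ M_T. -/

import Mathlib

open RCLike

/-- The minimum norm of a bounded linear operator. -/
noncomputable def minNorm {𝕜 X Y : Type*} [RCLike 𝕜] [NormedAddCommGroup X]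
    [NormedSpace 𝕜 X] [NormedAddCommGroup Y] [NormedSpace 𝕜 Y] (T : X →L[𝕜] Y) : ℝ :=
  sInf {r : ℝ | ∃ x : X, ‖x‖ = 1 ∧ r = ‖T x‖}

/-- Scalar key lemma: if `0 ≤ 2 re (c a) + ‖c‖² C` for all scalars `c`, with `C ≥ 0`,
then `a = 0`. -/
lemma scalar_key {𝕜 : Type*} [RCLike 𝕜] (a : 𝕜) (C : ℝ) (hC : 0 ≤ C)
    (h : ∀ c : 𝕜, 0 ≤ 2 * re (c * a) + ‖c‖ ^ 2 * C) : a = 0 := by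
  by_contra ha
  have h0 : (0:ℝ) < ‖a‖ := norm_pos_iff.2 ha
  set s : ℝ := 1 / (C + 1) with hs
  have hs0 : 0 < s := by positivity
  have hkey := h (((-s : ℝ) : 𝕜) * (starRingEnd 𝕜) a)
  have hre : re ((((-s : ℝ) : 𝕜) * (starRingEnd 𝕜) a) * a) = -s * ‖a‖ ^ 2 := by
    rw [mul_assoc, RCLike.conj_mul, ← RCLike.ofReal_pow, ← RCLike.ofReal_mul,
      RCLike.ofReal_re]
  have hn : ‖(((-s : ℝ) : 𝕜) * (starRingEnd 𝕜) a)‖ ^ 2 = s ^ 2 * ‖a‖ ^ 2 := by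
    rw [norm_mul, RCLike.norm_ofReal, norm_conj, abs_of_neg (by linarith)]
    ring
  rw [hre, hn] at hkey
  have hsC : s * C < 2 := by
    rw [hs, div_mul_eq_mul_div, div_lt_iff₀ (by linarith)]
    nlinarith
  have hprod : 0 < s * ‖a‖ ^ 2 := mul_pos hs0 (pow_pos h0 2)
  have hneg : s * ‖a‖ ^ 2 * (s * C - 2) < 0 :=
    mul_neg_of_pos_of_neg hprod (by linarith)
  nlinarith

lemma expand_sq {𝕜 E : Type*} [RCLike 𝕜] [NormedAddCommGroup E] [InnerProductSpace 𝕜 E]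
    (u v : E) (c : 𝕜) :
    ‖u + c • v‖ ^ 2 = ‖u‖ ^ 2 + 2 * re (c * (inner 𝕜 u v : 𝕜)) + ‖c‖ ^ 2 * ‖v‖ ^ 2 := by
  rw [@norm_add_sq 𝕜, inner_smul_right, norm_smul]
  ring

theorem stmt_12 {𝕜 H₁ H₂ : Type*} [RCLike 𝕜]
    [NormedAddCommGroup H₁] [InnerProductSpace 𝕜 H₁] [CompleteSpace H₁] [Nontrivial H₁]
    [NormedAddCommGroup H₂] [InnerProductSpace 𝕜 H₂] [CompleteSpace H₂]
    (T : H₁ →L[𝕜] H₂)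
    (hT : ¬ ∃ c : ℝ, 0 ≤ c ∧ ∀ z : H₁, ‖T z‖ = c * ‖z‖)
    (hM : {x : H₁ | ‖x‖ = 1 ∧ ‖T x‖ = ‖T‖}.Nonempty)
    (hm : {x : H₁ | ‖x‖ = 1 ∧ ‖T x‖ = minNorm T}.Nonempty) :
    ∀ y ∈ {x : H₁ | ‖x‖ = 1 ∧ ‖T x‖ = minNorm T},
      ∀ x ∈ {x : H₁ | ‖x‖ = 1 ∧ ‖T x‖ = ‖T‖}, (inner 𝕜 y x : 𝕜) = 0 := by
  intro y hy x hx
  obtain ⟨hy1, hy2⟩ := hy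
  obtain ⟨hx1, hx2⟩ := hx
  set m := minNorm T with hmdef
  set M := ‖T‖ with hMdef
  have hSne : {r : ℝ | ∃ z : H₁, ‖z‖ = 1 ∧ r = ‖T z‖}.Nonempty := ⟨‖T y‖, y, hy1, rfl⟩
  have hSbdd : BddBelow {r : ℝ | ∃ z : H₁, ‖z‖ = 1 ∧ r = ‖T z‖} :=
    ⟨0, fun r ⟨z, _, hr⟩ => hr ▸ norm_nonneg _⟩
  have hm0 : 0 ≤ m := le_csInf hSne (fun r ⟨z, _, hr⟩ => hr ▸ norm_nonneg _)
  have hmle : ∀ z : H₁, m * ‖z‖ ≤ ‖T z‖ := by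
    intro z
    rcases eq_or_ne z 0 with rfl | hz
    · simp
    · have hz0 : (0:ℝ) < ‖z‖ := norm_pos_iff.2 hz
      have hnc : ‖((‖z‖⁻¹ : ℝ) : 𝕜)‖ = ‖z‖⁻¹ := by
        rw [RCLike.norm_ofReal, abs_of_pos (inv_pos.2 hz0)]
      have hmem : ‖T (((‖z‖⁻¹ : ℝ) : 𝕜) • z)‖ ∈ {r : ℝ | ∃ z : H₁, ‖z‖ = 1 ∧ r = ‖T z‖} := by
        refine ⟨((‖z‖⁻¹ : ℝ) : 𝕜) • z, ?_, rfl⟩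
        rw [norm_smul, hnc, inv_mul_cancel₀ hz0.ne']
      have hle := csInf_le hSbdd hmem
      rw [map_smul, norm_smul, hnc] at hle
      calc m * ‖z‖ ≤ (‖z‖⁻¹ * ‖T z‖) * ‖z‖ := mul_le_mul_of_nonneg_right hle hz0.le
        _ = ‖T z‖ := by field_simp
  have hMle : ∀ z : H₁, ‖T z‖ ≤ M * ‖z‖ := fun z => T.le_opNorm z
  have hmleM : m ≤ M := by
    have := hMle y
    rw [hy1, mul_one] at this
    exact hy2 ▸ this
  have hmM : m < M := by
    rcases lt_or_eq_of_le hmleM with h | h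
    · exact h
    · refine absurd ⟨M, norm_nonneg T, fun z => le_antisymm (hMle z) ?_⟩ hT
      rw [← h]; exact hmle z
  -- min-point relation: ⟪Ty, Tx⟫ = m² ⟪y, x⟫
  have hmin : (inner 𝕜 (T y) (T x) : 𝕜) = (m ^ 2 : ℝ) * (inner 𝕜 y x : 𝕜) := by
    have key : ((inner 𝕜 (T y) (T x) : 𝕜) - (m ^ 2 : ℝ) * (inner 𝕜 y x : 𝕜)) = 0 := by
      apply scalar_key _ (M ^ 2 - m ^ 2) (by nlinarith)
      intro c
      have h1 : m ^ 2 * ‖y + c • x‖ ^ 2 ≤ ‖T (y + c • x)‖ ^ 2 := by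
        have h := hmle (y + c • x)
        have h2 := mul_le_mul h h (mul_nonneg hm0 (norm_nonneg _)) (norm_nonneg _)
        nlinarith
      rw [map_add, map_smul] at h1
      rw [expand_sq (𝕜 := 𝕜), expand_sq (𝕜 := 𝕜)] at h1
      rw [hy2, hy1, hx1, hx2] at h1
      have hre : re (c * ((inner 𝕜 (T y) (T x) : 𝕜) - ((m ^ 2 : ℝ) : 𝕜) * (inner 𝕜 y x : 𝕜)))
          = re (c * (inner 𝕜 (T y) (T x) : 𝕜)) - m ^ 2 * re (c * (inner 𝕜 y x : 𝕜)) := by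
        rw [mul_sub, map_sub, mul_left_comm, RCLike.re_ofReal_mul]
      rw [hre]
      nlinarith
    exact sub_eq_zero.mp key
  -- max-point relation: M² ⟪x, y⟫ = ⟪Tx, Ty⟫
  have hmax : ((M ^ 2 : ℝ) : 𝕜) * (inner 𝕜 x y : 𝕜) = (inner 𝕜 (T x) (T y) : 𝕜) := by
    have key : (((M ^ 2 : ℝ) : 𝕜) * (inner 𝕜 x y : 𝕜) - (inner 𝕜 (T x) (T y) : 𝕜)) = 0 := by
      apply scalar_key _ (M ^ 2 - m ^ 2) (by nlinarith)
      intro c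
      have h1 : ‖T (x + c • y)‖ ^ 2 ≤ M ^ 2 * ‖x + c • y‖ ^ 2 := by
        have h := hMle (x + c • y)
        have h2 := mul_le_mul h h (norm_nonneg _)
          (mul_nonneg (norm_nonneg T) (norm_nonneg _))
        nlinarith
      rw [map_add, map_smul] at h1
      rw [expand_sq (𝕜 := 𝕜), expand_sq (𝕜 := 𝕜)] at h1
      rw [hy2, hy1, hx1, hx2] at h1
      have hre : re (c * (((M ^ 2 : ℝ) : 𝕜) * (inner 𝕜 x y : 𝕜) - (inner 𝕜 (T x) (T y) : 𝕜)))
          = M ^ 2 * re (c * (inner 𝕜 x y : 𝕜)) - re (c * (inner 𝕜 (T x) (T y) : 𝕜)) := by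
        rw [mul_sub, map_sub, mul_left_comm, RCLike.re_ofReal_mul]
      rw [hre]
      nlinarith
    exact sub_eq_zero.mp key
  -- combine
  have hconj : (inner 𝕜 (T y) (T x) : 𝕜) = ((M ^ 2 : ℝ) : 𝕜) * (inner 𝕜 y x : 𝕜) := by
    have := congrArg (starRingEnd 𝕜) hmax
    rw [map_mul, RCLike.conj_ofReal, inner_conj_symm, inner_conj_symm] at this
    exact this.symm
  have hfin : (((M ^ 2 : ℝ) : 𝕜) - ((m ^ 2 : ℝ) : 𝕜)) * (inner 𝕜 y x : 𝕜) = 0 := by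
    rw [sub_mul, ← hmin, ← hconj, sub_self]
  have hne : (((M ^ 2 : ℝ) : 𝕜) - ((m ^ 2 : ℝ) : 𝕜)) ≠ 0 := by
    rw [← RCLike.ofReal_sub, ne_eq, RCLike.ofReal_eq_zero]
    nlinarith
  exact (mul_eq_zero.mp hfin).resolve_left hne
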